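/- Let n ≥ 2, let C, D ∈ ℝ^{n×n} be symmetric, and fix V ∈ ℝ^{n×(n−1)} with Vᵀ·1 = 0 and Vᵀ V = I_{n−1}. With OGW(C,D) := (1/n²)(‖C‖_F² + ‖D‖_F² − 2·sup_{P ∈ O_n ∩ E_n} tr(C P D Pᵀ)), OGW_o(C,D) := (1/n²)(‖C‖_F² + ‖D‖_F² − 2·sup_{P ∈ O_n} tr(C P D Pᵀ)), and OGW_lb(C,D) := (1/n²)·[ ‖C‖_F² + ‖D‖_F² − 2·Σ_{i=1}^{n−1} λᵢ↓(Vᵀ C V)·λᵢ↓(Vᵀ D V) − (4/n)·‖Vᵀ C 1‖·‖Vᵀ D 1‖ − (2/n²)·(1ᵀ C 1)(1ᵀ D 1) ], one has both OGW_o(C,D) ≤ OGW(C,D) and OGW_lb(C,D) ≤ OGW(C,D). -/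

import Mathlib

open Matrix BigOperators

noncomputable section

/-- Squared Frobenius norm of a real matrix. -/
def frobSq {m n : ℕ} (A : Matrix (Fin m) (Fin n) ℝ) : ℝ := ∑ i, ∑ j, (A i j) ^ 2

/-- Euclidean norm of a real vector. -/
def vnorm {n : ℕ} (v : Fin n → ℝ) : ℝ := Real.sqrt (∑ i, (v i) ^ 2)

/-- Eigenvalues of a real symmetric (Hermitian) matrix, listed in descending order. -/
def eigDesc {n : ℕ} {A : Matrix (Fin n) (Fin n) ℝ} (hA : A.IsHermitian) : Fin n → ℝ :=
  fun i => (hA.eigenvalues ∘ Tuple.sort hA.eigenvalues) i.rev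

/-- Conjugating a real symmetric (Hermitian) matrix preserves symmetry. -/
theorem conjHerm {n m : ℕ} (V : Matrix (Fin n) (Fin m) ℝ) {C : Matrix (Fin n) (Fin n) ℝ}
    (hC : C.IsHermitian) : (Vᵀ * C * V).IsHermitian := by
  have h := Matrix.isHermitian_mul_mul_conjTranspose Vᵀ hC
  simpa using h


/-- The set `O_n ∩ E_n` of orthogonal matrices whose row and column sums all equal `1`. -/
def OE (n : ℕ) : Set (Matrix (Fin n) (Fin n) ℝ) :=
  {P | Pᵀ * P = 1 ∧ (P *ᵥ (fun _ => (1 : ℝ)) = fun _ => 1)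
    ∧ (Pᵀ *ᵥ (fun _ => (1 : ℝ)) = fun _ => 1)}

/-- The orthogonal Gromov-Wasserstein discrepancy `OGW`. -/
def OGW (n : ℕ) (C D : Matrix (Fin n) (Fin n) ℝ) : ℝ :=
  (1 / (n : ℝ) ^ 2) * (frobSq C + frobSq D
    - 2 * sSup ((fun P => Matrix.trace (C * P * D * Pᵀ)) '' (OE n)))


/-- The closed-form lower bound `OGW_lb` of the orthogonal Gromov-Wasserstein discrepancy. -/
def OGWlb {n : ℕ} (V : Matrix (Fin n) (Fin (n - 1)) ℝ)
    (C D : Matrix (Fin n) (Fin n) ℝ) (hC : C.IsHermitian) (hD : D.IsHermitian) : ℝ :=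
  (1 / (n : ℝ) ^ 2) * (frobSq C + frobSq D
    - 2 * ∑ i, eigDesc (conjHerm V hC) i * eigDesc (conjHerm V hD) i
    - (4 / (n : ℝ)) * vnorm ((Vᵀ * C) *ᵥ (fun _ => (1 : ℝ)))
        * vnorm ((Vᵀ * D) *ᵥ (fun _ => (1 : ℝ)))
    - (2 / (n : ℝ) ^ 2) * ((∑ i, ∑ j, C i j) * (∑ i, ∑ j, D i j)))


/-- The relaxation `OGW_o`, optimizing the coupling over all orthogonal matrices. -/
def OGWo (n : ℕ) (C D : Matrix (Fin n) (Fin n) ℝ) : ℝ :=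
  (1 / (n : ℝ) ^ 2) * (frobSq C + frobSq D
    - 2 * sSup ((fun P => Matrix.trace (C * P * D * Pᵀ)) ''
        {P : Matrix (Fin n) (Fin n) ℝ | Pᵀ * P = 1}))

lemma eigDesc_antitone {n : ℕ} {A : Matrix (Fin n) (Fin n) ℝ} (hA : A.IsHermitian) :
    Antitone (eigDesc hA) := by
  intro i j hij
  exact Tuple.monotone_sort hA.eigenvalues (by simpa [Fin.rev_le_rev] using hij)

-- eigenvalues as permutation of eigDesc

lemma eig_eq_eigDesc_comp {n : ℕ} {A : Matrix (Fin n) (Fin n) ℝ} (hA : A.IsHermitian) :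
    ∃ π : Equiv.Perm (Fin n), ∀ j, hA.eigenvalues j = eigDesc hA (π j) := by
  refine ⟨(Tuple.sort hA.eigenvalues)⁻¹.trans (Fin.revPerm), fun j => ?_⟩
  simp [eigDesc, Fin.rev_rev]

-- rearrangement for antitone pairs

lemma antitone_rearrange {k : ℕ} {a b : Fin k → ℝ} (ha : Antitone a) (hb : Antitone b)
    (σ : Equiv.Perm (Fin k)) : ∑ i, a i * b (σ i) ≤ ∑ i, a i * b i := by
  have hmono : Monovary a b := by
    intro i j h
    have hji : j ≤ i := by
      by_contra h'
      exact absurd (hb (le_of_not_ge h')) (not_le.2 h)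
    exact ha hji
  exact hmono.sum_mul_comp_perm_le_sum_mul

lemma ds_bound {k : ℕ} {aD bD : Fin k → ℝ} (haD : Antitone aD) (hbD : Antitone bD)
    (a b : Fin k → ℝ) (π₁ π₂ : Equiv.Perm (Fin k))
    (h1 : ∀ j, a j = aD (π₁ j)) (h2 : ∀ j, b j = bD (π₂ j))
    {S : Matrix (Fin k) (Fin k) ℝ} (hS : S ∈ doublyStochastic ℝ (Fin k)) :
    ∑ i, ∑ j, a i * b j * S i j ≤ ∑ i, aD i * bD i := by
  obtain ⟨w, hw0, hw1, hwS⟩ := exists_eq_sum_perm_of_mem_doublyStochastic hS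
  have hperm : ∀ σ : Equiv.Perm (Fin k),
      ∑ i, ∑ j, a i * b j * (σ.permMatrix ℝ) i j = ∑ i, a i * b (σ i) := by
    intro σ
    refine Finset.sum_congr rfl fun i _ => ?_
    rw [Finset.sum_eq_single (σ i)]
    · simp [Equiv.Perm.permMatrix, PEquiv.toMatrix, Equiv.toPEquiv_apply]
    · intro j _ hj
      simp [Equiv.Perm.permMatrix, PEquiv.toMatrix, Equiv.toPEquiv_apply, Ne.symm hj]
    · simp
  have hbound : ∀ σ : Equiv.Perm (Fin k), ∑ i, a i * b (σ i) ≤ ∑ i, aD i * bD i := by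
    intro σ
    have : ∑ i, a i * b (σ i)
        = ∑ i, (fun j => aD j * bD ((π₁.symm.trans (σ.trans π₂)) j)) (π₁ i) := by
      refine Finset.sum_congr rfl fun i _ => ?_
      rw [h1, h2]
      simp
    rw [this, Equiv.sum_comp π₁ (fun j => aD j * bD ((π₁.symm.trans (σ.trans π₂)) j))]
    exact antitone_rearrange haD hbD _
  calc ∑ i, ∑ j, a i * b j * S i j
      = ∑ i, ∑ j, a i * b j * (∑ σ : Equiv.Perm (Fin k), w σ • σ.permMatrix ℝ) i j := by
        rw [hwS]
    _ = ∑ i, ∑ j, ∑ σ : Equiv.Perm (Fin k), w σ * (a i * b j * (σ.permMatrix ℝ) i j) := by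
        refine Finset.sum_congr rfl fun i _ => Finset.sum_congr rfl fun j _ => ?_
        simp only [Matrix.sum_apply, Matrix.smul_apply, smul_eq_mul, Finset.mul_sum]
        exact Finset.sum_congr rfl fun σ _ => by ring
    _ = ∑ i, ∑ σ : Equiv.Perm (Fin k), ∑ j, w σ * (a i * b j * (σ.permMatrix ℝ) i j) :=
        Finset.sum_congr rfl fun i _ => Finset.sum_comm
    _ = ∑ σ : Equiv.Perm (Fin k), ∑ i, ∑ j, w σ * (a i * b j * (σ.permMatrix ℝ) i j) :=
        Finset.sum_comm
    _ = ∑ σ : Equiv.Perm (Fin k), w σ * ∑ i, ∑ j, a i * b j * (σ.permMatrix ℝ) i j := by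
        refine Finset.sum_congr rfl fun σ _ => ?_
        simp [Finset.mul_sum]
    _ ≤ ∑ σ : Equiv.Perm (Fin k), w σ * ∑ i, aD i * bD i := by
        refine Finset.sum_le_sum fun σ _ => ?_
        rw [hperm]
        exact mul_le_mul_of_nonneg_left (hbound σ) (hw0 σ)
    _ = ∑ i, aD i * bD i := by rw [← Finset.sum_mul, hw1, one_mul]

lemma vonNeumann {k : ℕ} {A B Q : Matrix (Fin k) (Fin k) ℝ}
    (hA : A.IsHermitian) (hB : B.IsHermitian) (hQ : Qᵀ * Q = 1) :
    Matrix.trace (A * Q * B * Qᵀ) ≤ ∑ i, eigDesc hA i * eigDesc hB i := by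
  set a := hA.eigenvalues with ha
  set b := hB.eigenvalues with hb
  set U : Matrix (Fin k) (Fin k) ℝ := (hA.eigenvectorUnitary : Matrix (Fin k) (Fin k) ℝ) with hU
  set W : Matrix (Fin k) (Fin k) ℝ := (hB.eigenvectorUnitary : Matrix (Fin k) (Fin k) ℝ) with hW
  have specA : A = U * diagonal a * Uᵀ := by
    have h := hA.spectral_theorem
    rw [Unitary.conjStarAlgAut_apply, star_eq_conjTranspose, conjTranspose_eq_transpose_of_trivial] at h
    simpa using h
  have specB : B = W * diagonal b * Wᵀ := by
    have h := hB.spectral_theorem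
    rw [Unitary.conjStarAlgAut_apply, star_eq_conjTranspose, conjTranspose_eq_transpose_of_trivial] at h
    simpa using h
  have hUtU : Uᵀ * U = 1 := by
    have := (Unitary.mem_iff.mp hA.eigenvectorUnitary.2).1
    rwa [star_eq_conjTranspose, conjTranspose_eq_transpose_of_trivial] at this
  have hUUt : U * Uᵀ = 1 := mul_eq_one_comm.mp hUtU
  have hWtW : Wᵀ * W = 1 := by
    have := (Unitary.mem_iff.mp hB.eigenvectorUnitary.2).1
    rwa [star_eq_conjTranspose, conjTranspose_eq_transpose_of_trivial] at this
  set R : Matrix (Fin k) (Fin k) ℝ := Uᵀ * Q * W with hR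
  have hRT : Rᵀ = Wᵀ * Qᵀ * U := by
    rw [hR, Matrix.transpose_mul, Matrix.transpose_mul, Matrix.transpose_transpose, mul_assoc]
  have hRtR : Rᵀ * R = 1 := by
    rw [hRT, hR]
    calc Wᵀ * Qᵀ * U * (Uᵀ * Q * W) = Wᵀ * (Qᵀ * ((U * Uᵀ) * (Q * W))) := by
          simp only [mul_assoc]
      _ = 1 := by rw [hUUt, one_mul, ← mul_assoc Qᵀ Q W, hQ, one_mul, hWtW]
  have hRRt : R * Rᵀ = 1 := mul_eq_one_comm.mp hRtR
  have e1 : A * Q * B * Qᵀ = U * (diagonal a * R * diagonal b * (Wᵀ * Qᵀ)) := by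
    rw [specA, specB, hR]
    simp only [mul_assoc]
  have e2 : trace (A * Q * B * Qᵀ) = trace (diagonal a * R * diagonal b * Rᵀ) := by
    rw [e1, Matrix.trace_mul_comm, hRT]
    simp only [mul_assoc]
  have e3 : trace (diagonal a * R * diagonal b * Rᵀ) = ∑ i, ∑ j, a i * b j * (R i j)^2 := by
    rw [Matrix.trace]
    simp only [Matrix.diag_apply, Matrix.mul_apply, Matrix.transpose_apply,
      Matrix.diagonal_apply, ite_mul, zero_mul, mul_ite, mul_zero,
      Finset.sum_ite_eq, Finset.sum_ite_eq', Finset.mem_univ, if_true]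
    refine Finset.sum_congr rfl fun i _ => Finset.sum_congr rfl fun j _ => by ring
  set S : Matrix (Fin k) (Fin k) ℝ := Matrix.of (fun i j => (R i j)^2) with hSdef
  have hS : S ∈ doublyStochastic ℝ (Fin k) := by
    rw [mem_doublyStochastic]
    refine ⟨fun i j => sq_nonneg _, ?_, ?_⟩
    · funext i
      have := congrFun (congrFun hRRt i) i
      simp only [Matrix.mul_apply, Matrix.transpose_apply, Matrix.one_apply_eq] at this
      simpa [Matrix.mulVec, dotProduct, hSdef, pow_two] using this
    · funext j
      have := congrFun (congrFun hRtR j) j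
      simp only [Matrix.mul_apply, Matrix.transpose_apply, Matrix.one_apply_eq] at this
      simpa [Matrix.vecMul, dotProduct, hSdef, pow_two] using this
  obtain ⟨π₁, hπ₁⟩ := eig_eq_eigDesc_comp hA
  obtain ⟨π₂, hπ₂⟩ := eig_eq_eigDesc_comp hB
  calc trace (A * Q * B * Qᵀ) = ∑ i, ∑ j, a i * b j * S i j := by rw [e2, e3]; rfl
    _ ≤ ∑ i, eigDesc hA i * eigDesc hB i :=
        ds_bound (eigDesc_antitone hA) (eigDesc_antitone hB) a b π₁ π₂ hπ₁ hπ₂ hS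

lemma dot_le_vnorm {k : ℕ} (v w : Fin k → ℝ) : v ⬝ᵥ w ≤ vnorm v * vnorm w := by
  simpa [dotProduct, vnorm] using Real.sum_mul_le_sqrt_mul_sqrt Finset.univ v w

lemma vnorm_mulVec {k : ℕ} {Q : Matrix (Fin k) (Fin k) ℝ} (hQ : Qᵀ * Q = 1) (v : Fin k → ℝ) :
    vnorm (Q *ᵥ v) = vnorm v := by
  unfold vnorm
  congr 1
  have : ∑ i, (Q *ᵥ v) i ^ 2 = (Q *ᵥ v) ⬝ᵥ (Q *ᵥ v) := by
    simp [dotProduct, pow_two]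
  rw [this, Matrix.dotProduct_mulVec, ← Matrix.mulVec_transpose, Matrix.mulVec_mulVec, hQ,
    Matrix.one_mulVec]
  simp [dotProduct, pow_two]

lemma key_bound {n : ℕ} (hn : 2 ≤ n) {C D : Matrix (Fin n) (Fin n) ℝ}
    (hC : C.IsHermitian) (hD : D.IsHermitian)
    (V : Matrix (Fin n) (Fin (n - 1)) ℝ)
    (hV1 : Vᵀ *ᵥ (fun _ => (1 : ℝ)) = 0) (hV2 : Vᵀ * V = 1)
    {P : Matrix (Fin n) (Fin n) ℝ} (hP : P ∈ OE n)
    {AH : (Vᵀ * C * V).IsHermitian} {BH : (Vᵀ * D * V).IsHermitian} :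
    Matrix.trace (C * P * D * Pᵀ) ≤ ∑ i, eigDesc AH i * eigDesc BH i
      + (2 / (n : ℝ)) * vnorm ((Vᵀ * C) *ᵥ (fun _ => (1 : ℝ)))
          * vnorm ((Vᵀ * D) *ᵥ (fun _ => (1 : ℝ)))
      + (1 / (n : ℝ) ^ 2) * ((∑ i, ∑ j, C i j) * (∑ i, ∑ j, D i j)) := by
  obtain ⟨hP1, hP2, hP3⟩ := hP
  have hn0 : (n : ℝ) ≠ 0 := by
    have : 0 < n := lt_of_lt_of_le (by norm_num) hn
    exact_mod_cast this.ne'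
  set c : ℝ := (n : ℝ)⁻¹ with hc
  have hcn : c * (n : ℝ) = 1 := inv_mul_cancel₀ hn0
  set J : Matrix (Fin n) (Fin n) ℝ := Matrix.of (fun _ _ => (1 : ℝ)) with hJdef
  have hJsymm : Jᵀ = J := rfl
  have hVJ : Vᵀ * J = 0 := by
    ext i j
    simpa [Matrix.mul_apply, hJdef, Matrix.mulVec, dotProduct] using congrFun hV1 i
  have hJV : J * V = 0 := by
    ext i j
    simpa [Matrix.mul_apply, hJdef, Matrix.mulVec, dotProduct] using congrFun hV1 j
  have hPJ : P * J = J := by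
    ext i j
    simpa [Matrix.mul_apply, hJdef, Matrix.mulVec, dotProduct] using congrFun hP2 i
  have hPtJ : Pᵀ * J = J := by
    ext i j
    simpa [Matrix.mul_apply, hJdef, Matrix.mulVec, dotProduct] using congrFun hP3 i
  have hJP : J * P = J := by
    ext i j
    have := congrFun hP3 j
    simp only [Matrix.mulVec, dotProduct, Matrix.transpose_apply, mul_one] at this
    simpa [Matrix.mul_apply, hJdef] using this
  have hJJ : J * J = (n : ℝ) • J := by
    ext i j
    simp [Matrix.mul_apply, hJdef]
  have hMM : (V * Vᵀ) * (V * Vᵀ) = V * Vᵀ := by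
    calc (V * Vᵀ) * (V * Vᵀ) = V * ((Vᵀ * V) * Vᵀ) := by
          rw [Matrix.mul_assoc, Matrix.mul_assoc]
      _ = V * Vᵀ := by rw [hV2, Matrix.one_mul]
  have hMJ : (V * Vᵀ) * J = 0 := by rw [Matrix.mul_assoc, hVJ, Matrix.mul_zero]
  have hJM : J * (V * Vᵀ) = 0 := by rw [← Matrix.mul_assoc, hJV, Matrix.zero_mul]
  -- the projector identity
  set N : Matrix (Fin n) (Fin n) ℝ := 1 - V * Vᵀ - c • J with hNdef
  have hNsymm : Nᵀ = N := by
    rw [hNdef]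
    simp [Matrix.transpose_sub, Matrix.transpose_smul, Matrix.transpose_mul, hJsymm]
  have hMN : (V * Vᵀ) * N = 0 := by
    rw [hNdef]
    simp [Matrix.mul_sub, hMM, Matrix.mul_smul, hMJ]
  have hJN : J * N = 0 := by
    rw [hNdef]
    rw [Matrix.mul_sub, Matrix.mul_sub, mul_one, hJM, Matrix.mul_smul, hJJ, smul_smul, hcn,
      one_smul, sub_zero, sub_self]
  have hNN : N * N = N := by
    conv_lhs => rw [hNdef]
    rw [Matrix.sub_mul, Matrix.sub_mul, one_mul, hMN, Matrix.smul_mul, hJN, smul_zero,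
      sub_zero, sub_zero]
  have htrN : Matrix.trace N = 0 := by
    have h1 : Matrix.trace (V * Vᵀ) = ((n : ℝ) - 1) := by
      rw [Matrix.trace_mul_comm, hV2, Matrix.trace_one]
      simp only [Fintype.card_fin]
      rw [Nat.cast_sub (le_trans (by norm_num) hn)]
      norm_num
    have h2 : Matrix.trace J = (n : ℝ) := by
      simp [Matrix.trace, hJdef, Matrix.diag]
    rw [hNdef, Matrix.trace_sub, Matrix.trace_sub, Matrix.trace_one, Matrix.trace_smul, h1, h2]
    simp only [Fintype.card_fin, smul_eq_mul, hcn]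
    ring
  have hN0 : N = 0 := by
    have hsq : ∑ i, ∑ j, (N i j) ^ 2 = 0 := by
      have : ∑ i, ∑ j, (N i j) ^ 2 = Matrix.trace (N * N) := by
        simp only [Matrix.trace, Matrix.diag_apply, Matrix.mul_apply]
        refine Finset.sum_congr rfl fun i _ => Finset.sum_congr rfl fun j _ => ?_
        have : N j i = N i j := congrFun (congrFun hNsymm i) j
        rw [this]; ring
      rw [this, hNN, htrN]
    ext i j
    have hnn : ∀ i ∈ Finset.univ, (0:ℝ) ≤ ∑ j, (N i j)^2 :=
      fun i _ => Finset.sum_nonneg fun j _ => sq_nonneg _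
    have h1 := (Finset.sum_eq_zero_iff_of_nonneg hnn).mp hsq i (Finset.mem_univ i)
    have h2 := (Finset.sum_eq_zero_iff_of_nonneg (fun j _ => sq_nonneg (N i j))).mp h1 j
      (Finset.mem_univ j)
    simpa using pow_eq_zero_iff (n := 2) (by norm_num) |>.mp h2
  have hId : V * Vᵀ + c • J = 1 := by
    have : (1 : Matrix (Fin n) (Fin n) ℝ) - V * Vᵀ - c • J = 0 := by rw [← hNdef, hN0]
    have := sub_eq_zero.mp this
    linear_combination (norm := abel) -this
  set Q : Matrix (Fin (n-1)) (Fin (n-1)) ℝ := Vᵀ * P * V with hQdef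
  have hVVt : V * Vᵀ = 1 - c • J := by rw [← hId]; abel
  have hPdec : P = V * Q * Vᵀ + c • J := by
    have t1 : V * Vᵀ * P * (V * Vᵀ) = V * Q * Vᵀ := by
      rw [hQdef]
      simp only [Matrix.mul_assoc]
    have t2 : V * Vᵀ * P * J = 0 := by
      rw [Matrix.mul_assoc (V * Vᵀ) P J, hPJ, hMJ]
    have t3 : J * P * (V * Vᵀ) = 0 := by rw [hJP, hJM]
    have t4 : J * P * J = (n : ℝ) • J := by rw [hJP, hJJ]
    have expand : (V * Vᵀ + c • J) * P * (V * Vᵀ + c • J)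
        = V * Vᵀ * P * (V * Vᵀ) + c • (V * Vᵀ * P * J) + c • (J * P * (V * Vᵀ))
          + (c * c) • (J * P * J) := by
      simp only [Matrix.add_mul, Matrix.mul_add, Matrix.smul_mul, Matrix.mul_smul, smul_smul,
        smul_add]
      abel
    calc P = (V * Vᵀ + c • J) * P * (V * Vᵀ + c • J) := by
          rw [hId, Matrix.one_mul, Matrix.mul_one]
      _ = V * Q * Vᵀ + c • J := by
          rw [expand, t1, t2, t3, t4, smul_zero, add_zero, smul_smul, mul_assoc, hcn, mul_one, add_zero]
  have hQorth : Qᵀ * Q = 1 := by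
    have hQt : Qᵀ = Vᵀ * Pᵀ * V := by
      rw [hQdef, Matrix.transpose_mul, Matrix.transpose_mul, Matrix.transpose_transpose,
        Matrix.mul_assoc]
    have e : Qᵀ * Q = Vᵀ * Pᵀ * (V * Vᵀ) * (P * V) := by
      rw [hQt, hQdef]
      simp only [Matrix.mul_assoc]
    have f1 : Vᵀ * Pᵀ * (P * V) = 1 := by
      rw [Matrix.mul_assoc Vᵀ Pᵀ (P * V), ← Matrix.mul_assoc Pᵀ P V, hP1, Matrix.one_mul, hV2]
    have f0 : Vᵀ * Pᵀ * J = 0 := by rw [Matrix.mul_assoc, hPtJ, hVJ]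
    rw [e, hVVt, Matrix.mul_sub, Matrix.sub_mul, Matrix.mul_one, Matrix.mul_smul,
      Matrix.smul_mul, f0, Matrix.zero_mul, smul_zero, sub_zero, f1]
  have hCt : Cᵀ = C := by
    have h := hC.eq
    rwa [conjTranspose_eq_transpose_of_trivial] at h
  have hDt : Dᵀ = D := by
    have h := hD.eq
    rwa [conjTranspose_eq_transpose_of_trivial] at h
  set cv : Fin (n-1) → ℝ := (Vᵀ * C) *ᵥ (fun _ => (1:ℝ)) with hcv
  set dv : Fin (n-1) → ℝ := (Vᵀ * D) *ᵥ (fun _ => (1:ℝ)) with hdv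
  set X : Matrix (Fin n) (Fin n) ℝ := V * Q * Vᵀ with hX
  have hXt : Xᵀ = V * Qᵀ * Vᵀ := by
    rw [hX, Matrix.transpose_mul, Matrix.transpose_mul, Matrix.transpose_transpose,
      Matrix.mul_assoc]
  have hexp : Matrix.trace (C * P * D * Pᵀ)
      = Matrix.trace (C * X * D * Xᵀ) + c * Matrix.trace (C * X * D * J)
        + c * Matrix.trace (C * J * D * Xᵀ) + (c * c) * Matrix.trace (C * J * D * J) := by
    rw [hPdec, Matrix.transpose_add, Matrix.transpose_smul, hJsymm]
    simp only [Matrix.mul_add, Matrix.add_mul, Matrix.mul_smul, Matrix.smul_mul,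
      Matrix.trace_add, Matrix.trace_smul, smul_eq_mul, smul_smul]
    ring
  have hT1 : Matrix.trace (C * X * D * Xᵀ)
      = Matrix.trace ((Vᵀ * C * V) * Q * (Vᵀ * D * V) * Qᵀ) := by
    rw [hX, hXt]
    have e : C * (V * Q * Vᵀ) * D * (V * Qᵀ * Vᵀ) = (C * (V * Q * Vᵀ) * D * (V * Qᵀ)) * Vᵀ := by
      simp only [Matrix.mul_assoc]
    rw [e, Matrix.trace_mul_comm]
    congr 1
    simp only [Matrix.mul_assoc]
  have hB1 : Matrix.trace (C * X * D * Xᵀ) ≤ ∑ i, eigDesc AH i * eigDesc BH i := by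
    rw [hT1]; exact vonNeumann AH BH hQorth
  have traceJ : ∀ Y : Matrix (Fin n) (Fin n) ℝ, Matrix.trace (Y * J) = ∑ i, ∑ j, Y i j := by
    intro Y
    simp [Matrix.trace, Matrix.diag, Matrix.mul_apply, hJdef]
  have hT4 : Matrix.trace (C * J * D * J) = (∑ i, ∑ j, C i j) * (∑ i, ∑ j, D i j) := by
    rw [traceJ (C * J * D)]
    have e : ∀ i j, (C * J * D) i j = ∑ l, (∑ k, C i k) * D l j := by
      intro i j
      simp [Matrix.mul_apply, hJdef, Finset.sum_mul]
    simp_rw [e, ← Finset.mul_sum, ← Finset.sum_mul]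
    congr 1
    exact Finset.sum_comm
  have hT2 : Matrix.trace (C * X * D * J) = (Qᵀ *ᵥ cv) ⬝ᵥ dv := by
    have h1 : Matrix.trace (C * X * D * J)
        = (fun _ => (1:ℝ)) ⬝ᵥ ((C * X * D) *ᵥ (fun _ => 1)) := by
      rw [traceJ]
      simp [dotProduct, Matrix.mulVec]
    have hsplit : C * X * D = (C * (V * Q)) * (Vᵀ * D) := by
      rw [hX]; simp only [Matrix.mul_assoc]
    rw [h1, hsplit, ← Matrix.mulVec_mulVec, Matrix.dotProduct_mulVec]
    congr 1
    rw [← Matrix.mulVec_transpose, Matrix.transpose_mul, Matrix.transpose_mul, hCt,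
      Matrix.mul_assoc, ← Matrix.mulVec_mulVec]
  have hT3 : Matrix.trace (C * J * D * Xᵀ) = Matrix.trace (C * X * D * J) := by
    conv_lhs => rw [← Matrix.trace_transpose]
    have e : (C * J * D * Xᵀ)ᵀ = (X * D * J) * C := by
      simp only [Matrix.transpose_mul, Matrix.transpose_transpose, hCt, hDt, hJsymm]
      simp only [Matrix.mul_assoc]
    rw [e, Matrix.trace_mul_comm]
    congr 1
    simp only [Matrix.mul_assoc]
  have hQQt : Qᵀᵀ * Qᵀ = 1 := by
    rw [Matrix.transpose_transpose]; exact mul_eq_one_comm.mp hQorth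
  have hB2 : (Qᵀ *ᵥ cv) ⬝ᵥ dv ≤ vnorm cv * vnorm dv := by
    have h := dot_le_vnorm (Qᵀ *ᵥ cv) dv
    rwa [vnorm_mulVec hQQt] at h
  have hc0 : 0 ≤ c := by rw [hc]; positivity
  have e2n : 2 / (n:ℝ) = 2 * c := by rw [hc]; ring
  have e1n2 : 1 / (n:ℝ)^2 = c * c := by rw [hc]; ring
  rw [hexp, hT3, hT2, hT4, e2n, e1n2]
  have := mul_le_mul_of_nonneg_left hB2 hc0
  linarith [hB1]

/-- Both `OGW_o` and `OGW_lb` are lower bounds of `OGW`. -/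
theorem OGWo_OGWlb_le_OGW (n : ℕ) (hn : 2 ≤ n)
    (C D : Matrix (Fin n) (Fin n) ℝ) (hC : C.IsHermitian) (hD : D.IsHermitian)
    (V : Matrix (Fin n) (Fin (n - 1)) ℝ)
    (hV1 : Vᵀ *ᵥ (fun _ => (1 : ℝ)) = 0) (hV2 : Vᵀ * V = 1) :
    OGWo n C D ≤ OGW n C D ∧ OGWlb V C D hC hD ≤ OGW n C D := by
  set f : Matrix (Fin n) (Fin n) ℝ → ℝ := fun P => Matrix.trace (C * P * D * Pᵀ) with hf
  have hne : (f '' (OE n)).Nonempty := by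
    refine ⟨f 1, ⟨(1 : Matrix (Fin n) (Fin n) ℝ), ?_, rfl⟩⟩
    refine ⟨by simp [Matrix.transpose_one], ?_, ?_⟩
    · simp [Matrix.one_mulVec]
    · simp [Matrix.transpose_one, Matrix.one_mulVec]
  have hbdd : BddAbove (f '' {P : Matrix (Fin n) (Fin n) ℝ | Pᵀ * P = 1}) := by
    refine ⟨∑ i, eigDesc hC i * eigDesc hD i, ?_⟩
    rintro x ⟨P, hP, rfl⟩
    exact vonNeumann hC hD hP
  have hsub : f '' (OE n) ⊆ f '' {P : Matrix (Fin n) (Fin n) ℝ | Pᵀ * P = 1} :=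
    Set.image_mono (fun P hP => hP.1)
  have hle1 : sSup (f '' (OE n)) ≤ sSup (f '' {P : Matrix (Fin n) (Fin n) ℝ | Pᵀ * P = 1}) :=
    csSup_le_csSup hbdd hne hsub
  have hle2 : sSup (f '' (OE n)) ≤ ∑ i, eigDesc (conjHerm V hC) i * eigDesc (conjHerm V hD) i
      + (2 / (n : ℝ)) * vnorm ((Vᵀ * C) *ᵥ (fun _ => (1 : ℝ)))
          * vnorm ((Vᵀ * D) *ᵥ (fun _ => (1 : ℝ)))
      + (1 / (n : ℝ) ^ 2) * ((∑ i, ∑ j, C i j) * (∑ i, ∑ j, D i j)) := by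
    refine csSup_le hne ?_
    rintro x ⟨P, hP, rfl⟩
    exact key_bound hn hC hD V hV1 hV2 hP (AH := conjHerm V hC) (BH := conjHerm V hD)
  have hp : (0:ℝ) ≤ 1 / (n:ℝ)^2 := by positivity
  constructor
  · rw [OGWo, OGW]
    apply mul_le_mul_of_nonneg_left _ hp
    rw [← hf]
    linarith
  · rw [OGWlb, OGW]
    apply mul_le_mul_of_nonneg_left _ hp
    rw [← hf]
    have h2 := mul_le_mul_of_nonneg_left hle2 (by norm_num : (0:ℝ) ≤ 2)
    rw [mul_add, mul_add] at h2
    have e1 : (2:ℝ) * (2 / (n : ℝ) * vnorm ((Vᵀ * C) *ᵥ (fun _ => (1 : ℝ)))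
        * vnorm ((Vᵀ * D) *ᵥ (fun _ => (1 : ℝ))))
        = 4 / (n : ℝ) * vnorm ((Vᵀ * C) *ᵥ (fun _ => (1 : ℝ)))
        * vnorm ((Vᵀ * D) *ᵥ (fun _ => (1 : ℝ))) := by ring
    have e2 : (2:ℝ) * (1 / (n : ℝ) ^ 2 * ((∑ i, ∑ j, C i j) * (∑ i, ∑ j, D i j)))
        = 2 / (n : ℝ) ^ 2 * ((∑ i, ∑ j, C i j) * (∑ i, ∑ j, D i j)) := by ring
    rw [e1, e2] at h2
    linarith

end
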